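/- arXiv:2505.24495 — 2 statements merged into one kernel-verified Lean document; each statement's English description precedes it below -/
import Mathlib

section
/- Let γ = 1/10 and define F : 𝔻 → ℂ by F(λ) = (1-|λ|²)^γ (1 - \bar{λ})(1 - λ²). Then the range of F is not a convex subset of ℂ. -/
open Complex

private lemma factor_aux (l : ℂ) :
    (((1 - ‖l‖ ^ 2) ^ ((1:ℝ)/10) : ℝ) : ℂ) *
      (1 - (starRingEnd ℂ) l) * (1 - l ^ 2)
    = ((((1 - ‖l‖ ^ 2) ^ ((1:ℝ)/10) * Complex.normSq (1 - l)) : ℝ) : ℂ)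
        * (1 + l) := by
  have h2 : (1 - (starRingEnd ℂ) l) * (1 - l) = ((Complex.normSq (1 - l) : ℝ) : ℂ) := by
    have hc : (starRingEnd ℂ) (1 - l) = 1 - (starRingEnd ℂ) l := by simp
    rw [← hc, ← Complex.normSq_eq_conj_mul_self]
  calc (((1 - ‖l‖ ^ 2) ^ ((1:ℝ)/10) : ℝ) : ℂ) *
        (1 - (starRingEnd ℂ) l) * (1 - l ^ 2)
      = (((1 - ‖l‖ ^ 2) ^ ((1:ℝ)/10) : ℝ) : ℂ) *
        ((1 - (starRingEnd ℂ) l) * (1 - l)) * (1 + l) := by ring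
    _ = (((1 - ‖l‖ ^ 2) ^ ((1:ℝ)/10) : ℝ) : ℂ) *
        ((Complex.normSq (1 - l) : ℝ) : ℂ) * (1 + l) := by rw [h2]
    _ = ((((1 - ‖l‖ ^ 2) ^ ((1:ℝ)/10) * Complex.normSq (1 - l)) : ℝ) : ℂ)
        * (1 + l) := by push_cast; ring

private lemma rpow_lb : (91/100 : ℝ) ≤ (37/50 : ℝ) ^ ((1:ℝ)/10) := by
  have h : ((91/100:ℝ))^(10:ℕ) ≤ 37/50 := by norm_num
  calc (91/100:ℝ) = (((91/100:ℝ))^(10:ℕ)) ^ ((1:ℝ)/10) := by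
        rw [← Real.rpow_natCast (91/100 : ℝ) 10, ← Real.rpow_mul (by norm_num)]
        norm_num
    _ ≤ (37/50 : ℝ) ^ ((1:ℝ)/10) := Real.rpow_le_rpow (by positivity) h (by norm_num)

private lemma mem_ball_aux (l : ℂ) (h : Complex.normSq l < 1) :
    l ∈ Metric.ball (0:ℂ) 1 := by
  rw [Metric.mem_ball, dist_zero_right]
  nlinarith [Complex.sq_norm l, norm_nonneg l]

set_option maxHeartbeats 1000000 in
theorem stmt_11 :
    ¬ Convex ℝ
      ((fun l : ℂ =>
          (((1 - ‖l‖ ^ 2) ^ ((1:ℝ)/10) : ℝ) : ℂ) *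
            (1 - (starRingEnd ℂ) l) * (1 - l ^ 2)) ''
        Metric.ball (0:ℂ) 1) := by
  intro hconv
  set F : ℂ → ℂ := fun l =>
    (((1 - ‖l‖ ^ 2) ^ ((1:ℝ)/10) : ℝ) : ℂ) *
      (1 - (starRingEnd ℂ) l) * (1 - l ^ 2) with hF
  set l0 : ℂ := ⟨-1/10, 1/2⟩ with hl0
  set l1 : ℂ := ⟨-1/10, -1/2⟩ with hl1
  have hn0 : Complex.normSq l0 = 13/50 := by
    simp [hl0, Complex.normSq_mk]; norm_num
  have hn1 : Complex.normSq l1 = 13/50 := by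
    simp [hl1, Complex.normSq_mk]; norm_num
  have hm0 : l0 ∈ Metric.ball (0:ℂ) 1 := mem_ball_aux _ (by rw [hn0]; norm_num)
  have hm1 : l1 ∈ Metric.ball (0:ℂ) 1 := mem_ball_aux _ (by rw [hn1]; norm_num)
  -- the common real scalar
  set R : ℝ := (37/50 : ℝ) ^ ((1:ℝ)/10) * (73/50) with hR
  have habs0 : (1 : ℝ) - ‖l0‖ ^ 2 = 37/50 := by
    rw [Complex.sq_norm, hn0]; norm_num
  have habs1 : (1 : ℝ) - ‖l1‖ ^ 2 = 37/50 := by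
    rw [Complex.sq_norm, hn1]; norm_num
  have hns0 : Complex.normSq (1 - l0) = 73/50 := by
    have : (1 : ℂ) - l0 = ⟨11/10, -1/2⟩ := by
      apply Complex.ext <;> simp [hl0] <;> norm_num
    rw [this, Complex.normSq_mk]; norm_num
  have hns1 : Complex.normSq (1 - l1) = 73/50 := by
    have : (1 : ℂ) - l1 = ⟨11/10, 1/2⟩ := by
      apply Complex.ext <;> simp [hl1] <;> norm_num
    rw [this, Complex.normSq_mk]; norm_num
  have hF0 : F l0 = ((R : ℝ) : ℂ) * (1 + l0) := by
    rw [hF]; simp only; rw [factor_aux, habs0, hns0]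
  have hF1 : F l1 = ((R : ℝ) : ℂ) * (1 + l1) := by
    rw [hF]; simp only; rw [factor_aux, habs1, hns1]
  -- midpoint is real
  have hmid : (1/2 : ℝ) • F l0 + (1/2 : ℝ) • F l1 = (((R * (9/10)) : ℝ) : ℂ) := by
    rw [hF0, hF1]
    have h01 : (1 + l0) + (1 + l1) = ((9/5 : ℝ) : ℂ) := by
      apply Complex.ext <;> simp [hl0, hl1] <;> norm_num
    rw [Complex.real_smul, Complex.real_smul]
    push_cast
    rw [show ((1:ℂ)/2) * (↑R * (1 + l0)) + (1/2) * (↑R * (1 + l1))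
        = (↑R * (((1 + l0) + (1 + l1)))) / 2 by ring, h01]
    push_cast; ring
  -- midpoint lies in the image by convexity
  have hmem : (((R * (9/10)) : ℝ) : ℂ) ∈
      ((fun l : ℂ =>
          (((1 - ‖l‖ ^ 2) ^ ((1:ℝ)/10) : ℝ) : ℂ) *
            (1 - (starRingEnd ℂ) l) * (1 - l ^ 2)) ''
        Metric.ball (0:ℂ) 1) := by
    rw [← hmid]
    exact hconv (Set.mem_image_of_mem _ hm0) (Set.mem_image_of_mem _ hm1)
      (by norm_num) (by norm_num) (by norm_num)
  obtain ⟨μ, hμball, hμeq⟩ := hmem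
  -- analyze μ
  have hμn : Complex.normSq μ < 1 := by
    rw [Metric.mem_ball, dist_zero_right] at hμball
    nlinarith [Complex.sq_norm μ, norm_nonneg μ]
  set Rμ : ℝ := (1 - ‖μ‖ ^ 2) ^ ((1:ℝ)/10) * Complex.normSq (1 - μ) with hRμ
  have hμfac : ((Rμ : ℝ) : ℂ) * (1 + μ) = (((R * (9/10)) : ℝ) : ℂ) := by
    rw [hRμ, ← factor_aux]; exact hμeq
  -- Rμ > 0 unless μ = 1 (impossible in ball)
  have hone : μ ≠ 1 := by
    intro h
    rw [h] at hμn
    simp [Complex.normSq_one] at hμn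
  have hRμpos : 0 < Rμ := by
    apply mul_pos
    · apply Real.rpow_pos_of_pos
      have := Complex.sq_norm μ
      nlinarith
    · have : (1 : ℂ) - μ ≠ 0 := by
        intro h; apply hone; linear_combination -h
      exact Complex.normSq_pos.mpr this
  -- imaginary part: Rμ * μ.im = 0, so μ.im = 0
  have hμim : μ.im = 0 := by
    have h := congrArg Complex.im hμfac
    simp [Complex.mul_im, Complex.add_im, Complex.add_re, Complex.ofReal_im,
      Complex.ofReal_re] at h
    rcases h with h | h
    · exact absurd h hRμpos.ne'
    · exact h
  -- real part
  have hre : Rμ * (1 + μ.re) = R * (9/10) := by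
    have h := congrArg Complex.re hμfac
    simp [Complex.mul_re, Complex.add_im, Complex.add_re, Complex.ofReal_im,
      Complex.ofReal_re, hμim] at h
    linarith
  -- compute Rμ on the real axis
  set x : ℝ := μ.re with hx
  have hμx : Complex.normSq μ = x ^ 2 := by
    rw [Complex.normSq_apply, hμim, hx]; ring
  have hxlt : x ^ 2 < 1 := by rw [← hμx]; exact hμn
  have hns : Complex.normSq (1 - μ) = (1 - x) ^ 2 := by
    rw [Complex.normSq_apply]
    simp [Complex.sub_re, Complex.sub_im, hμim, hx]
    ring
  have hRμval : Rμ = (1 - x ^ 2) ^ ((1:ℝ)/10) * (1 - x) ^ 2 := by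
    rw [hRμ, Complex.sq_norm, hμx, hns]
  -- bound: LHS ≤ 32/27
  have hrpow_le : (1 - x ^ 2) ^ ((1:ℝ)/10) ≤ 1 :=
    Real.rpow_le_one (by nlinarith) (by nlinarith) (by norm_num)
  have hxu : x < 1 := by nlinarith
  have hxl : -1 < x := by nlinarith
  have hpoly : (1 - x) ^ 2 * (1 + x) ≤ 32/27 := by
    have key : 32/27 - (1 - x) ^ 2 * (1 + x) = (3*x + 1) ^ 2 * (5 - 3*x) / 27 := by
      ring
    have h1 : 0 ≤ (3*x + 1) ^ 2 * (5 - 3*x) :=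
      mul_nonneg (sq_nonneg _) (by linarith)
    linarith
  have hx1 : 0 < 1 + x := by nlinarith
  have hlhs : Rμ * (1 + x) ≤ 32/27 := by
    rw [hRμval]
    calc (1 - x ^ 2) ^ ((1:ℝ)/10) * (1 - x) ^ 2 * (1 + x)
        ≤ 1 * ((1 - x) ^ 2 * (1 + x)) := by
          rw [mul_assoc]
          apply mul_le_mul_of_nonneg_right hrpow_le
          positivity
      _ ≤ 32/27 := by rw [one_mul]; exact hpoly
  -- but RHS > 32/27
  have hRlb : (32/27 : ℝ) < R * (9/10) := by
    rw [hR]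
    nlinarith [rpow_lb]
  rw [hre] at hlhs
  linarith
end

section
/- Let γ > 0 and m, n ∈ ℕ with m ≠ n, m, n ≥ 1. Then the set { (1-|λ|²)^γ \bar{λ}^m λ^n : λ in the open unit disc } equals the closed disc centered at the origin of radius (2γ/(m+n+2γ))^γ · ((m+n)/(m+n+2γ))^((m+n)/2), and in particular is convex in ℂ. -/
open Real Complex Metric Set

lemma key_ineq (γ β : ℝ) (hγ : 0 < γ) (hβ : 0 < β) {t : ℝ} (ht0 : 0 ≤ t) (ht1 : t ≤ 1) :
    (1-t)^γ * t^β ≤ (γ/(γ+β))^γ * (β/(γ+β))^β := by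
  have hγβ : 0 < γ + β := by linarith
  set a := γ/(γ+β) with ha_def
  set b := β/(γ+β) with hb_def
  have ha : 0 < a := div_pos hγ hγβ
  have hb : 0 < b := div_pos hβ hγβ
  have hab : a + b = 1 := by rw [ha_def, hb_def]; field_simp
  have h1t : 0 ≤ 1 - t := by linarith
  have hp₁ : 0 ≤ (1-t)/a := div_nonneg h1t ha.le
  have hp₂ : 0 ≤ t/b := div_nonneg ht0 hb.le
  have hgm := Real.geom_mean_le_arith_mean2_weighted ha.le hb.le hp₁ hp₂ hab
  have hsum : a*((1-t)/a) + b*(t/b) = 1 := by field_simp; ring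
  rw [hsum] at hgm
  have h2' : (((1-t)/a)^a * ((t/b))^b)^(γ+β) ≤ 1^(γ+β) :=
    Real.rpow_le_rpow (by positivity) hgm hγβ.le
  rw [Real.one_rpow, Real.mul_rpow (Real.rpow_nonneg hp₁ _) (Real.rpow_nonneg hp₂ _),
    ← Real.rpow_mul hp₁, ← Real.rpow_mul hp₂] at h2'
  have ea : a*(γ+β) = γ := by rw [ha_def]; field_simp
  have eb : b*(γ+β) = β := by rw [hb_def]; field_simp
  rw [ea, eb] at h2'
  have e1 : a * ((1-t)/a) = 1 - t := by field_simp
  have e2 : b * (t/b) = t := by field_simp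
  calc (1-t)^γ * t^β = (a^γ * ((1-t)/a)^γ) * (b^β * (t/b)^β) := by
        rw [← Real.mul_rpow ha.le hp₁, ← Real.mul_rpow hb.le hp₂, e1, e2]
    _ = (a^γ * b^β) * (((1-t)/a)^γ * (t/b)^β) := by ring
    _ ≤ (a^γ * b^β) * 1 := mul_le_mul_of_nonneg_left h2' (by positivity)
    _ = a^γ * b^β := mul_one _

lemma pow_half (a : ℝ) (ha : 0 ≤ a) (k : ℕ) : a^k = (a^2)^((k:ℝ)/2) := by
  rw [show (a^2 : ℝ) = a ^ (2:ℝ) by rw [← Real.rpow_natCast a 2]; norm_num,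
    ← Real.rpow_natCast a k, ← Real.rpow_mul ha]
  congr 1
  ring

theorem stmt_12 (γ : ℝ) (hγ : 0 < γ) (m n : ℕ) (hm : 1 ≤ m) (hn : 1 ≤ n)
    (hmn : m ≠ n) :
    (fun l : ℂ =>
        (((1 - ‖l‖ ^ 2) ^ γ : ℝ) : ℂ) *
          ((starRingEnd ℂ) l) ^ m * l ^ n) '' Metric.ball (0:ℂ) 1 =
      Metric.closedBall (0:ℂ)
        ((2 * γ / ((m : ℝ) + n + 2 * γ)) ^ γ *
          (((m : ℝ) + n) / ((m : ℝ) + n + 2 * γ)) ^ (((m : ℝ) + n) / 2)) ∧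
    Convex ℝ
      ((fun l : ℂ =>
          (((1 - ‖l‖ ^ 2) ^ γ : ℝ) : ℂ) *
            ((starRingEnd ℂ) l) ^ m * l ^ n) '' Metric.ball (0:ℂ) 1) := by
  have hm' : (1:ℝ) ≤ m := by exact_mod_cast hm
  have hn' : (1:ℝ) ≤ n := by exact_mod_cast hn
  set s : ℝ := (m:ℝ) + n with hs_def
  have hs : 0 < s := by rw [hs_def]; linarith
  set β : ℝ := s/2 with hβ_def
  have hβ : 0 < β := by rw [hβ_def]; linarith
  have hγβ : 0 < γ + β := by linarith
  set M : ℝ := (γ/(γ+β))^γ * (β/(γ+β))^β with hM_def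
  have hM0 : 0 ≤ M := by positivity
  have hden : s + 2*γ ≠ 0 := ne_of_gt (by linarith)
  have hrad : (2*γ/(s+2*γ))^γ * (s/(s+2*γ))^β = M := by
    have e1 : 2*γ/(s+2*γ) = γ/(γ+β) := by rw [hβ_def, div_eq_div_iff (by linarith) (by linarith)]; ring
    have e2 : s/(s+2*γ) = β/(γ+β) := by rw [hβ_def, div_eq_div_iff (by linarith) (by linarith)]; ring
    rw [e1, e2, hM_def]
  have hcast : ((m+n:ℕ):ℝ)/2 = β := by rw [hβ_def, hs_def]; push_cast; ring
  have himg : (fun l : ℂ =>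
        (((1 - ‖l‖ ^ 2) ^ γ : ℝ) : ℂ) *
          ((starRingEnd ℂ) l) ^ m * l ^ n) '' Metric.ball (0:ℂ) 1 =
      Metric.closedBall (0:ℂ) M := by
    apply Set.Subset.antisymm
    · rintro x ⟨l, hl, rfl⟩
      rw [mem_ball_zero_iff] at hl
      have ha0 : 0 ≤ ‖l‖ := norm_nonneg _
      have h1 : ‖l‖ ^ 2 ≤ 1 := by nlinarith
      have h2 : (0:ℝ) ≤ 1 - ‖l‖ ^ 2 := by linarith
      rw [mem_closedBall_zero_iff]
      rw [norm_mul, norm_mul, norm_pow, norm_pow, Complex.norm_conj, Complex.norm_real, Real.norm_eq_abs,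
        _root_.abs_of_nonneg (Real.rpow_nonneg h2 γ), mul_assoc, ← pow_add,
        pow_half ‖l‖ ha0 (m+n), hcast]
      exact key_ineq γ β hγ hβ (sq_nonneg _) h1
    · intro w hw
      rw [mem_closedBall_zero_iff] at hw
      set t₀ : ℝ := β/(γ+β) with ht₀_def
      have ht₀0 : 0 ≤ t₀ := by positivity
      have ht₀1 : t₀ < 1 := by rw [ht₀_def, div_lt_one hγβ]; linarith
      have hcont : ContinuousOn (fun t : ℝ => (1-t)^γ * t^β) (Icc 0 t₀) := by
        apply Continuous.continuousOn
        exact ((continuous_const.sub continuous_id).rpow_const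
          (fun x => Or.inr hγ.le)).mul (continuous_id.rpow_const (fun x => Or.inr hβ.le))
      have hf0 : (1-(0:ℝ))^γ * (0:ℝ)^β = 0 := by
        simp [Real.zero_rpow hβ.ne']
      have hft₀ : (1-t₀)^γ * t₀^β = M := by
        have e : 1 - t₀ = γ/(γ+β) := by rw [ht₀_def]; field_simp; ring
        rw [e]
      have hIVT := intermediate_value_Icc ht₀0 hcont
      rw [hf0, hft₀] at hIVT
      obtain ⟨t, ht, hteq⟩ := hIVT ⟨norm_nonneg _, hw⟩
      have ht0 : 0 ≤ t := ht.1
      have ht1 : t < 1 := lt_of_le_of_lt ht.2 ht₀1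
      have hnm : (n:ℝ) - m ≠ 0 := by
        intro h
        exact hmn (by exact_mod_cast (sub_eq_zero.mp h).symm)
      set θ : ℝ := w.arg / ((n:ℝ) - m) with hθ_def
      set r : ℝ := Real.sqrt t with hr_def
      have hr0 : 0 ≤ r := Real.sqrt_nonneg t
      have hr1 : r < 1 := by
        rw [hr_def, show (1:ℝ) = Real.sqrt 1 by simp]
        exact Real.sqrt_lt_sqrt ht0 ht1
      have hrsq : r^2 = t := Real.sq_sqrt ht0
      refine ⟨(r:ℂ) * Complex.exp (θ * I), ?_, ?_⟩
      · rw [mem_ball_zero_iff, norm_mul, Complex.norm_exp_ofReal_mul_I,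
          Complex.norm_real, Real.norm_eq_abs, _root_.abs_of_nonneg hr0, mul_one]
        exact hr1
      · have habsl : ‖(r:ℂ) * Complex.exp (θ * I)‖ = r := by
          rw [norm_mul, Complex.norm_exp_ofReal_mul_I, Complex.norm_real, Real.norm_eq_abs,
            _root_.abs_of_nonneg hr0, mul_one]
        have hconj : (starRingEnd ℂ) ((r:ℂ) * Complex.exp (θ * I)) =
            (r:ℂ) * Complex.exp (-(θ * I)) := by
          rw [map_mul, Complex.conj_ofReal, ← Complex.exp_conj]
          congr 1
          simp [Complex.conj_ofReal, Complex.conj_I]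
        have hscal : (1-t)^γ * r^m * r^n = ‖w‖ := by
          rw [mul_assoc, ← pow_add, pow_half r hr0 (m+n), hrsq, hcast]
          exact hteq
        have hexp_eq : (m:ℂ) * -(↑θ * I) + (n:ℂ) * (↑θ * I) = ↑w.arg * I := by
          have e : ((n:ℝ) - m) * θ = w.arg := by
            rw [hθ_def]; field_simp
          have e' : ((n:ℂ) - m) * θ = (w.arg : ℂ) := by exact_mod_cast e
          rw [← e']; ring
        simp only
        rw [habsl, hrsq, hconj, mul_pow, mul_pow, ← Complex.exp_nat_mul, ← Complex.exp_nat_mul]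
        calc (((1-t)^γ : ℝ):ℂ) * ((r:ℂ)^m * Complex.exp ((m:ℂ) * -(↑θ * I))) *
              ((r:ℂ)^n * Complex.exp ((n:ℂ) * (↑θ * I)))
            = (((1-t)^γ * r^m * r^n : ℝ):ℂ) *
              Complex.exp ((m:ℂ) * -(↑θ * I) + (n:ℂ) * (↑θ * I)) := by
              rw [Complex.exp_add]; push_cast; ring
          _ = ((‖w‖ : ℝ):ℂ) * Complex.exp (↑w.arg * I) := by
              rw [hscal, hexp_eq]
          _ = w := Complex.norm_mul_exp_arg_mul_I w
  refine ⟨?_, ?_⟩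
  · rw [himg, ← hrad]
  · rw [himg]
    exact convex_closedBall _ _
end
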